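/- arXiv:2405.09339 — 7 statements merged into one kernel-verified Lean document; each statement's English description precedes it below -/
import Mathlib

section
/- Let β > 0, T > 0, and let τ : [0,T] → ℝ be continuously differentiable with τ(t) > 0 and τ'(t) ≥ 1 for all t. Define a(t) = (1/(β σ²)) · τ(t)(T−t)/(τ(t)+(T−t)) for a constant σ > 0. Then a solves the Riccati-type ODE (1/2)a'(t) + (β/(2σ²))·(1/β − σ²·a(t)/τ(t))² − (β σ²/2)·(−1/τ)'(t)·a(t)² = 0 with terminal condition a(T) = 0. -/
/-- The CARA value-function coefficient `a(t) = (1/(βσ²)) τ(t)(T−t)/(τ(t)+(T−t))` solves the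
Riccati-type ODE `(1/2)a' + (β/(2σ²))(1/β − σ²a/τ)² − (βσ²/2)(τ'/τ²)a² = 0`, `a(T) = 0`. -/
theorem stmt1 (β σ T : ℝ) (hβ : 0 < β) (hσ : 0 < σ) (hT : 0 < T)
    (τ τ' : ℝ → ℝ)
    (hτdiff : ∀ t ∈ Set.Icc (0 : ℝ) T, HasDerivAt τ (τ' t) t)
    (hτ'cont : ContinuousOn τ' (Set.Icc 0 T))
    (hτpos : ∀ t ∈ Set.Icc (0 : ℝ) T, 0 < τ t)
    (hτ' : ∀ t ∈ Set.Icc (0 : ℝ) T, 1 ≤ τ' t)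
    (a : ℝ → ℝ)
    (ha : a = fun t => (1 / (β * σ ^ 2)) * (τ t * (T - t) / (τ t + (T - t)))) :
    a T = 0 ∧ ∀ t ∈ Set.Icc (0 : ℝ) T, ∃ a' : ℝ, HasDerivAt a a' t ∧
      (1 / 2) * a' + (β / (2 * σ ^ 2)) * (1 / β - σ ^ 2 * a t / τ t) ^ 2
        - (β * σ ^ 2 / 2) * (τ' t / τ t ^ 2) * a t ^ 2 = 0 := by
  subst ha
  constructor
  · simp
  · intro t ht
    have hτt := hτpos t ht
    have hv : 0 ≤ T - t := by linarith [ht.2]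
    have hD : τ t + (T - t) ≠ 0 := by positivity
    have hτne : τ t ≠ 0 := ne_of_gt hτt
    have hβne : β ≠ 0 := ne_of_gt hβ
    have hσne : σ ≠ 0 := ne_of_gt hσ
    have hderiv := HasDerivAt.const_mul ((1:ℝ) / (β * σ ^ 2))
      ((((hτdiff t ht).mul ((hasDerivAt_const t T).sub (hasDerivAt_id t))).div
        ((hτdiff t ht).add ((hasDerivAt_const t T).sub (hasDerivAt_id t))) hD))
    refine ⟨_, hderiv, ?_⟩
    simp only [Pi.mul_apply, Pi.add_apply, Pi.sub_apply, id_eq, id]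
    field_simp
    ring
end

section
/- Let T > 0, t₀ > 0. Let τ¹, τ² : [0,T] → ℝ be continuously differentiable, with τ¹(0) = τ²(0) = t₀, τ'ᵢ(t) ≥ 1, and τ¹(t) ≥ τ²(t) for all t ∈ [0,T]. Define c(τ) := (1/(2β)) ∫₀ᵀ τ'(s)(T−s) / (τ(s)(τ(s)+T−s)) ds for β > 0. Then c(τ¹) ≥ c(τ²). -/
open Set intervalIntegral

lemma stmt5_lb (T t₀ : ℝ) (τ τ' : ℝ → ℝ)
    (hdiff : ∀ t ∈ Set.Icc (0 : ℝ) T, HasDerivAt τ (τ' t) t)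
    (h0 : τ 0 = t₀)
    (h' : ∀ t ∈ Set.Icc (0 : ℝ) T, 1 ≤ τ' t) :
    ∀ s ∈ Set.Icc (0 : ℝ) T, t₀ + s ≤ τ s := by
  intro s hs
  have hτc : ContinuousOn τ (Set.Icc 0 T) :=
    fun x hx => (hdiff x hx).continuousAt.continuousWithinAt
  have hmono : MonotoneOn (fun x => τ x - x) (Set.Icc 0 T) := by
    apply monotoneOn_of_deriv_nonneg (convex_Icc 0 T)
    · exact hτc.sub continuousOn_id
    · intro x hx
      rw [interior_Icc] at hx
      exact ((hdiff x (Set.Ioo_subset_Icc_self hx)).sub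
        (hasDerivAt_id x)).differentiableAt.differentiableWithinAt
    · intro x hx
      rw [interior_Icc] at hx
      rw [show deriv (fun x => τ x - x) x = τ' x - 1 from ((hdiff x (Set.Ioo_subset_Icc_self hx)).sub (hasDerivAt_id' x)).deriv]
      linarith [h' x (Set.Ioo_subset_Icc_self hx)]
  have h0mem : (0 : ℝ) ∈ Set.Icc (0 : ℝ) T := ⟨le_refl 0, hs.1.trans hs.2⟩
  have := hmono h0mem hs hs.1
  simp only [h0, sub_zero] at this
  linarith

lemma stmt5_key (T t₀ : ℝ) (hT : 0 < T) (ht₀ : 0 < t₀) (τ τ' : ℝ → ℝ)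
    (hdiff : ∀ t ∈ Set.Icc (0 : ℝ) T, HasDerivAt τ (τ' t) t)
    (hcont : ContinuousOn τ' (Set.Icc 0 T))
    (h0 : τ 0 = t₀)
    (h' : ∀ t ∈ Set.Icc (0 : ℝ) T, 1 ≤ τ' t) :
    ∫ s in (0 : ℝ)..T, τ' s * (T - s) / (τ s * (τ s + T - s))
      = (Real.log (t₀ + T) - Real.log t₀) - ∫ s in (0 : ℝ)..T, 1 / (τ s + T - s) := by
  have hlb := stmt5_lb T t₀ τ τ' hdiff h0 h'
  have hτpos : ∀ s ∈ Set.Icc (0 : ℝ) T, 0 < τ s := by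
    intro s hs; have := hlb s hs; linarith [hs.1]
  have hdpos : ∀ s ∈ Set.Icc (0 : ℝ) T, 0 < τ s + T - s := by
    intro s hs; have := hlb s hs; linarith [hs.2]
  have hτc : ContinuousOn τ (Set.Icc 0 T) :=
    fun x hx => (hdiff x hx).continuousAt.continuousWithinAt
  set g : ℝ → ℝ := fun s => τ' s / τ s - (τ' s - 1) / (τ s + T - s) with hg
  set h : ℝ → ℝ := fun s => 1 / (τ s + T - s) with hh
  set G : ℝ → ℝ := fun s => Real.log (τ s) - Real.log (τ s + T - s) with hG
  have hGd : ∀ s ∈ Set.Icc (0 : ℝ) T, HasDerivAt G (g s) s := by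
    intro s hs
    have h1 : HasDerivAt (fun x => Real.log (τ x)) (τ' s / τ s) s :=
      (hdiff s hs).log (hτpos s hs).ne'
    have h2 : HasDerivAt (fun x => τ x + T - x) (τ' s - 1) s := by
      have := ((hdiff s hs).add_const T).sub (hasDerivAt_id s)
      exact this
    have h3 : HasDerivAt (fun x => Real.log (τ x + T - x)) ((τ' s - 1) / (τ s + T - s)) s :=
      h2.log (hdpos s hs).ne'
    exact h1.sub h3
  have huIcc : Set.uIcc (0 : ℝ) T = Set.Icc 0 T := Set.uIcc_of_le hT.le
  have hgc : ContinuousOn g (Set.Icc 0 T) := by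
    apply ContinuousOn.sub
    · exact hcont.div hτc (fun x hx => (hτpos x hx).ne')
    · exact (hcont.sub continuousOn_const).div
        ((hτc.add continuousOn_const).sub continuousOn_id)
        (fun x hx => (hdpos x hx).ne')
  have hhc : ContinuousOn h (Set.Icc 0 T) :=
    continuousOn_const.div
      ((hτc.add continuousOn_const).sub continuousOn_id)
      (fun x hx => (hdpos x hx).ne')
  have hgi : IntervalIntegrable g MeasureTheory.volume 0 T :=
    (hgc.mono huIcc.subset).intervalIntegrable
  have hhi : IntervalIntegrable h MeasureTheory.volume 0 T :=
    (hhc.mono huIcc.subset).intervalIntegrable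
  have hcongr : ∫ s in (0 : ℝ)..T, τ' s * (T - s) / (τ s * (τ s + T - s))
      = ∫ s in (0 : ℝ)..T, (g s - h s) := by
    apply intervalIntegral.integral_congr
    intro s hs
    rw [huIcc] at hs
    have h1 := (hτpos s hs).ne'
    have h2 := (hdpos s hs).ne'
    simp only [hg, hh]
    field_simp
    ring
  have hFTC : ∫ s in (0 : ℝ)..T, g s = G T - G 0 := by
    apply intervalIntegral.integral_eq_sub_of_hasDerivAt
    · intro s hs; rw [huIcc] at hs; exact hGd s hs
    · exact hgi
  have hGT : G T = 0 := by simp [hG]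
  have hG0 : G 0 = Real.log t₀ - Real.log (t₀ + T) := by
    simp [hG, h0]
  rw [hcongr, intervalIntegral.integral_sub hgi hhi, hFTC, hGT, hG0]
  ring

/-- A larger informative clock gives a larger CARA value-function constant term:
if `τ¹ ≥ τ²` pointwise then `c(τ¹) ≥ c(τ²)`. -/
theorem stmt5 (T t₀ β : ℝ) (hT : 0 < T) (ht₀ : 0 < t₀) (hβ : 0 < β)
    (τ₁ τ₁' τ₂ τ₂' : ℝ → ℝ)
    (h₁diff : ∀ t ∈ Set.Icc (0 : ℝ) T, HasDerivAt τ₁ (τ₁' t) t)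
    (h₂diff : ∀ t ∈ Set.Icc (0 : ℝ) T, HasDerivAt τ₂ (τ₂' t) t)
    (h₁cont : ContinuousOn τ₁' (Set.Icc 0 T))
    (h₂cont : ContinuousOn τ₂' (Set.Icc 0 T))
    (h₁0 : τ₁ 0 = t₀) (h₂0 : τ₂ 0 = t₀)
    (h₁' : ∀ t ∈ Set.Icc (0 : ℝ) T, 1 ≤ τ₁' t)
    (h₂' : ∀ t ∈ Set.Icc (0 : ℝ) T, 1 ≤ τ₂' t)
    (hle : ∀ t ∈ Set.Icc (0 : ℝ) T, τ₂ t ≤ τ₁ t) :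
    (1 / (2 * β)) * ∫ s in (0 : ℝ)..T, τ₂' s * (T - s) / (τ₂ s * (τ₂ s + T - s)) ≤
      (1 / (2 * β)) * ∫ s in (0 : ℝ)..T, τ₁' s * (T - s) / (τ₁ s * (τ₁ s + T - s)) := by
  have hlb₁ := stmt5_lb T t₀ τ₁ τ₁' h₁diff h₁0 h₁'
  have hlb₂ := stmt5_lb T t₀ τ₂ τ₂' h₂diff h₂0 h₂'
  have hd₁pos : ∀ s ∈ Set.Icc (0 : ℝ) T, 0 < τ₁ s + T - s := by
    intro s hs; have := hlb₁ s hs; linarith [hs.2]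
  have hd₂pos : ∀ s ∈ Set.Icc (0 : ℝ) T, 0 < τ₂ s + T - s := by
    intro s hs; have := hlb₂ s hs; linarith [hs.2]
  have h₁τc : ContinuousOn τ₁ (Set.Icc 0 T) :=
    fun x hx => (h₁diff x hx).continuousAt.continuousWithinAt
  have h₂τc : ContinuousOn τ₂ (Set.Icc 0 T) :=
    fun x hx => (h₂diff x hx).continuousAt.continuousWithinAt
  have huIcc : Set.uIcc (0 : ℝ) T = Set.Icc 0 T := Set.uIcc_of_le hT.le
  have hh₁i : IntervalIntegrable (fun s => 1 / (τ₁ s + T - s)) MeasureTheory.volume 0 T := by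
    apply ContinuousOn.intervalIntegrable
    rw [huIcc]
    exact continuousOn_const.div
      ((h₁τc.add continuousOn_const).sub continuousOn_id)
      (fun x hx => (hd₁pos x hx).ne')
  have hh₂i : IntervalIntegrable (fun s => 1 / (τ₂ s + T - s)) MeasureTheory.volume 0 T := by
    apply ContinuousOn.intervalIntegrable
    rw [huIcc]
    exact continuousOn_const.div
      ((h₂τc.add continuousOn_const).sub continuousOn_id)
      (fun x hx => (hd₂pos x hx).ne')
  have hmono : ∫ s in (0 : ℝ)..T, 1 / (τ₁ s + T - s)
      ≤ ∫ s in (0 : ℝ)..T, 1 / (τ₂ s + T - s) := by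
    apply intervalIntegral.integral_mono_on hT.le hh₁i hh₂i
    intro s hs
    exact one_div_le_one_div_of_le (hd₂pos s hs) (by linarith [hle s hs])
  rw [stmt5_key T t₀ hT ht₀ τ₁ τ₁' h₁diff h₁cont h₁0 h₁',
    stmt5_key T t₀ hT ht₀ τ₂ τ₂' h₂diff h₂cont h₂0 h₂']
  have hβ' : (0 : ℝ) ≤ 1 / (2 * β) := by positivity
  apply mul_le_mul_of_nonneg_left _ hβ'
  linarith
end

section
/- Let T > 0, t₀ > 0, 0 < γ < 1 with t₀/T > (1−γ)/γ, and let τ¹, τ² : [0,T] → ℝ be continuously differentiable with τⁱ(0) = t₀, (τⁱ)'(t) ≥ 1, and τ¹(t) ≥ τ²(t) for all t. Define c(τ) := (1/(2γ)) ∫₀ᵀ τ'(s)·((1−γ)/γ)(T−s) / (τ(s)·(τ(s) − ((1−γ)/γ)(T−s))) ds. Then c(τ¹) ≥ c(τ²). -/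
/-- If `τ 0 = t₀` and `τ' ≥ 1` on `[0,T]`, then `τ t ≥ t₀ + t` on `[0,T]`. -/
lemma stmt6_lower (T t₀ : ℝ) (τ τ' : ℝ → ℝ)
    (hdiff : ∀ t ∈ Set.Icc (0 : ℝ) T, HasDerivAt τ (τ' t) t)
    (h0 : τ 0 = t₀)
    (h' : ∀ t ∈ Set.Icc (0 : ℝ) T, 1 ≤ τ' t) :
    ∀ t ∈ Set.Icc (0 : ℝ) T, t₀ + t ≤ τ t := by
  intro t ht
  have hcontτ : ContinuousOn τ (Set.Icc 0 T) :=
    fun x hx => (hdiff x hx).continuousAt.continuousWithinAt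
  have hmono : MonotoneOn (fun x => τ x - x) (Set.Icc 0 T) := by
    apply monotoneOn_of_deriv_nonneg (convex_Icc 0 T)
    · exact hcontτ.sub continuousOn_id
    · intro x hx
      rw [interior_Icc] at hx
      have hd : HasDerivAt (fun x => τ x - x) (τ' x - 1) x := by
        exact (hdiff x (Set.mem_Icc_of_Ioo hx)).sub (hasDerivAt_id x)
      exact hd.differentiableAt.differentiableWithinAt
    · intro x hx
      rw [interior_Icc] at hx
      have hd : HasDerivAt (fun x => τ x - x) (τ' x - 1) x := by
        exact (hdiff x (Set.mem_Icc_of_Ioo hx)).sub (hasDerivAt_id x)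
      rw [hd.deriv]
      have := h' x (Set.mem_Icc_of_Ioo hx)
      linarith
  have h0mem : (0 : ℝ) ∈ Set.Icc (0 : ℝ) T := by
    constructor <;> [rfl; exact le_trans ht.1 ht.2]
  have := hmono h0mem ht ht.1
  simp only [h0, sub_zero] at this
  linarith [this]

/-- Key identity: the integral equals a constant minus `∫ a/(τ s - a (T - s))`. -/
lemma stmt6_key (T t₀ a : ℝ) (hT : 0 < T) (ht₀ : 0 < t₀) (ha : 0 < a) (haT : a * T < t₀)
    (τ τ' : ℝ → ℝ)
    (hdiff : ∀ t ∈ Set.Icc (0 : ℝ) T, HasDerivAt τ (τ' t) t)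
    (hcont : ContinuousOn τ' (Set.Icc 0 T))
    (h0 : τ 0 = t₀)
    (hlow : ∀ t ∈ Set.Icc (0 : ℝ) T, t₀ + t ≤ τ t) :
    ∫ s in (0 : ℝ)..T, τ' s * (a * (T - s)) / (τ s * (τ s - a * (T - s)))
      = (Real.log t₀ - Real.log (t₀ - a * T))
        - ∫ s in (0 : ℝ)..T, a / (τ s - a * (T - s)) := by
  have huIcc : Set.uIcc (0 : ℝ) T = Set.Icc 0 T := Set.uIcc_of_le hT.le
  -- positivity facts
  have hτpos : ∀ s ∈ Set.Icc (0 : ℝ) T, 0 < τ s := by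
    intro s hs; have := hlow s hs; linarith [hs.1]
  have hdpos : ∀ s ∈ Set.Icc (0 : ℝ) T, 0 < τ s - a * (T - s) := by
    intro s hs
    have h1 := hlow s hs
    have h2 : a * (T - s) ≤ a * T := by nlinarith [hs.1]
    linarith [hs.1]
  have hcontτ : ContinuousOn τ (Set.Icc 0 T) :=
    fun x hx => (hdiff x hx).continuousAt.continuousWithinAt
  have hcontd : ContinuousOn (fun s => τ s - a * (T - s)) (Set.Icc 0 T) :=
    hcontτ.sub (continuousOn_const.mul (continuousOn_const.sub continuousOn_id))
  -- F and its derivative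
  set F : ℝ → ℝ := fun s => Real.log (τ s - a * (T - s)) - Real.log (τ s) with hF
  set F' : ℝ → ℝ := fun s => (τ' s + a) / (τ s - a * (T - s)) - τ' s / τ s with hF'
  have hFderiv : ∀ s ∈ Set.Icc (0 : ℝ) T, HasDerivAt F (F' s) s := by
    intro s hs
    have hinner : HasDerivAt (fun x => τ x - a * (T - x)) (τ' s + a) s := by
      have h1 : HasDerivAt (fun x : ℝ => a * (T - x)) (a * (-1)) s :=
        ((hasDerivAt_id s).const_sub T).const_mul a
      have := (hdiff s hs).sub h1
      rw [show τ' s + a = τ' s - a * (-1) by ring]; exact this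
    have hlog1 : HasDerivAt (fun x => Real.log (τ x - a * (T - x)))
        ((τ' s + a) / (τ s - a * (T - s))) s := hinner.log (ne_of_gt (hdpos s hs))
    have hlog2 : HasDerivAt (fun x => Real.log (τ x))
        (τ' s / τ s) s := (hdiff s hs).log (ne_of_gt (hτpos s hs))
    exact hlog1.sub hlog2
  -- integrabilities
  have hcontF' : ContinuousOn F' (Set.Icc 0 T) := by
    apply ContinuousOn.sub
    · exact ((hcont.add continuousOn_const).div hcontd (fun s hs => ne_of_gt (hdpos s hs)))
    · exact hcont.div hcontτ (fun s hs => ne_of_gt (hτpos s hs))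
  have hcontg : ContinuousOn (fun s => a / (τ s - a * (T - s))) (Set.Icc 0 T) :=
    continuousOn_const.div hcontd (fun s hs => ne_of_gt (hdpos s hs))
  have hintF' : IntervalIntegrable F' MeasureTheory.volume 0 T :=
    (hcontF'.mono (by rw [huIcc])).intervalIntegrable
  have hintg : IntervalIntegrable (fun s => a / (τ s - a * (T - s)))
      MeasureTheory.volume 0 T :=
    (hcontg.mono (by rw [huIcc])).intervalIntegrable
  -- pointwise identity
  have heq : Set.EqOn (fun s => τ' s * (a * (T - s)) / (τ s * (τ s - a * (T - s))))
      (fun s => F' s - a / (τ s - a * (T - s))) (Set.uIcc 0 T) := by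
    intro s hs
    rw [huIcc] at hs
    have h1 : τ s ≠ 0 := ne_of_gt (hτpos s hs)
    have h2 : τ s - a * (T - s) ≠ 0 := ne_of_gt (hdpos s hs)
    simp only [hF']
    field_simp
    ring
  rw [intervalIntegral.integral_congr heq,
    intervalIntegral.integral_sub hintF' hintg,
    intervalIntegral.integral_eq_sub_of_hasDerivAt
      (fun s hs => hFderiv s (huIcc ▸ hs)) hintF']
  have hFT : F T = 0 := by simp [hF]
  have hF0 : F 0 = Real.log (t₀ - a * T) - Real.log t₀ := by
    simp [hF, h0]
  rw [hFT, hF0]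
  ring

/-- Monotonicity of the CRRA (`0 < γ < 1`) value-function constant term in the
informative clock: if `τ¹ ≥ τ²` pointwise then `c(τ¹) ≥ c(τ²)`. -/
theorem stmt6 (T t₀ γ : ℝ) (hT : 0 < T) (ht₀ : 0 < t₀) (hγ0 : 0 < γ) (hγ1 : γ < 1)
    (hcond : (1 - γ) / γ < t₀ / T)
    (τ₁ τ₁' τ₂ τ₂' : ℝ → ℝ)
    (h₁diff : ∀ t ∈ Set.Icc (0 : ℝ) T, HasDerivAt τ₁ (τ₁' t) t)
    (h₂diff : ∀ t ∈ Set.Icc (0 : ℝ) T, HasDerivAt τ₂ (τ₂' t) t)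
    (h₁cont : ContinuousOn τ₁' (Set.Icc 0 T))
    (h₂cont : ContinuousOn τ₂' (Set.Icc 0 T))
    (h₁0 : τ₁ 0 = t₀) (h₂0 : τ₂ 0 = t₀)
    (h₁' : ∀ t ∈ Set.Icc (0 : ℝ) T, 1 ≤ τ₁' t)
    (h₂' : ∀ t ∈ Set.Icc (0 : ℝ) T, 1 ≤ τ₂' t)
    (hle : ∀ t ∈ Set.Icc (0 : ℝ) T, τ₂ t ≤ τ₁ t) :
    (1 / (2 * γ)) * ∫ s in (0 : ℝ)..T,
        τ₂' s * (((1 - γ) / γ) * (T - s)) / (τ₂ s * (τ₂ s - ((1 - γ) / γ) * (T - s))) ≤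
      (1 / (2 * γ)) * ∫ s in (0 : ℝ)..T,
        τ₁' s * (((1 - γ) / γ) * (T - s)) / (τ₁ s * (τ₁ s - ((1 - γ) / γ) * (T - s))) := by
  set a : ℝ := (1 - γ) / γ with haeq
  have ha : 0 < a := div_pos (by linarith) hγ0
  have haT : a * T < t₀ := by
    have := (lt_div_iff₀ hT).mp hcond
    linarith
  have hlow₁ := stmt6_lower T t₀ τ₁ τ₁' h₁diff h₁0 h₁'
  have hlow₂ := stmt6_lower T t₀ τ₂ τ₂' h₂diff h₂0 h₂'
  have key₁ := stmt6_key T t₀ a hT ht₀ ha haT τ₁ τ₁' h₁diff h₁cont h₁0 hlow₁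
  have key₂ := stmt6_key T t₀ a hT ht₀ ha haT τ₂ τ₂' h₂diff h₂cont h₂0 hlow₂
  rw [key₁, key₂]
  have hdpos₂ : ∀ s ∈ Set.Icc (0 : ℝ) T, 0 < τ₂ s - a * (T - s) := by
    intro s hs
    have h1 := hlow₂ s hs
    have h2 : a * (T - s) ≤ a * T := by nlinarith [hs.1]
    linarith [hs.1]
  have huIcc : Set.uIcc (0 : ℝ) T = Set.Icc 0 T := Set.uIcc_of_le hT.le
  have hcontτ₁ : ContinuousOn τ₁ (Set.Icc 0 T) :=
    fun x hx => (h₁diff x hx).continuousAt.continuousWithinAt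
  have hcontτ₂ : ContinuousOn τ₂ (Set.Icc 0 T) :=
    fun x hx => (h₂diff x hx).continuousAt.continuousWithinAt
  have hdpos₁ : ∀ s ∈ Set.Icc (0 : ℝ) T, 0 < τ₁ s - a * (T - s) := by
    intro s hs; have := hdpos₂ s hs; have := hle s hs; linarith
  have hint₁ : IntervalIntegrable (fun s => a / (τ₁ s - a * (T - s)))
      MeasureTheory.volume 0 T := by
    apply ContinuousOn.intervalIntegrable
    rw [huIcc]
    exact continuousOn_const.div
      (hcontτ₁.sub (continuousOn_const.mul (continuousOn_const.sub continuousOn_id)))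
      (fun s hs => ne_of_gt (hdpos₁ s hs))
  have hint₂ : IntervalIntegrable (fun s => a / (τ₂ s - a * (T - s)))
      MeasureTheory.volume 0 T := by
    apply ContinuousOn.intervalIntegrable
    rw [huIcc]
    exact continuousOn_const.div
      (hcontτ₂.sub (continuousOn_const.mul (continuousOn_const.sub continuousOn_id)))
      (fun s hs => ne_of_gt (hdpos₂ s hs))
  have hmono : (∫ s in (0 : ℝ)..T, a / (τ₁ s - a * (T - s)))
      ≤ ∫ s in (0 : ℝ)..T, a / (τ₂ s - a * (T - s)) := by
    apply intervalIntegral.integral_mono_on hT.le hint₁ hint₂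
    intro s hs
    exact div_le_div_of_nonneg_left ha.le (hdpos₂ s hs) (by linarith [hle s hs])
  have hcoef : (0 : ℝ) ≤ 1 / (2 * γ) := by positivity
  apply mul_le_mul_of_nonneg_left _ hcoef
  linarith
end

section
/- Let T > 0, t₀ > 0, γ > 1, and let τ¹, τ² : [0,T] → ℝ be continuously differentiable with τⁱ(0) = t₀, (τⁱ)'(t) ≥ 1, and τ¹(t) ≥ τ²(t) for all t. Define c(τ) := (1/(2γ)) ∫₀ᵀ τ'(s)·((1−γ)/γ)(T−s) / (τ(s)·(τ(s) − ((1−γ)/γ)(T−s))) ds. Then c(τ¹) ≤ c(τ²), and since the CRRA utility x^{1−γ}/(1−γ) is negative for γ > 1, the value V = U(e^{rT}x₀)·exp(γ·(a(0)(μ₀−r)²/2 + c(τ))) still satisfies V(τ¹) ≥ V(τ²). -/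
open Set intervalIntegral

/-- Key computation: the integral splits into a boundary term (depending only on `t₀, T, γ`)
plus a monotone-in-`τ` piece. -/
lemma clock_integral_eq (T t₀ γ : ℝ) (hT : 0 < T) (ht₀ : 0 < t₀) (hγ : 1 < γ)
    (τ τ' : ℝ → ℝ)
    (hdiff : ∀ t ∈ Set.Icc (0 : ℝ) T, HasDerivAt τ (τ' t) t)
    (hcont : ContinuousOn τ' (Set.Icc 0 T))
    (h0 : τ 0 = t₀)
    (h' : ∀ t ∈ Set.Icc (0 : ℝ) T, 1 ≤ τ' t) :
    (∫ s in (0:ℝ)..T,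
        τ' s * (((1 - γ) / γ) * (T - s)) / (τ s * (τ s - ((1 - γ) / γ) * (T - s))))
    = (Real.log t₀ - Real.log (t₀ - ((1 - γ) / γ) * T))
      + ((γ - 1) / γ) * ∫ s in (0:ℝ)..T, 1 / (τ s - ((1 - γ) / γ) * (T - s)) := by
  have hγ0 : (0:ℝ) < γ := lt_trans one_pos hγ
  set k : ℝ → ℝ := fun s => ((1 - γ) / γ) * (T - s) with hkdef
  have hkderiv : ∀ s : ℝ, HasDerivAt k ((γ - 1) / γ) s := by
    intro s
    have : HasDerivAt (fun s : ℝ => ((1 - γ) / γ) * (T - s)) (((1 - γ) / γ) * (0 - 1)) s :=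
      ((hasDerivAt_const s T).sub (hasDerivAt_id s)).const_mul _
    convert this using 1
    field_simp
    ring
  have hτcont : ContinuousOn τ (Set.Icc 0 T) := fun x hx =>
    (hdiff x hx).continuousAt.continuousWithinAt
  -- τ is at least t₀ on [0,T]
  have hmono : MonotoneOn τ (Set.Icc 0 T) := by
    apply (strictMonoOn_of_deriv_pos (convex_Icc 0 T) hτcont ?_).monotoneOn
    intro x hx
    rw [interior_Icc] at hx
    rw [(hdiff x (Ioo_subset_Icc_self hx)).deriv]
    exact lt_of_lt_of_le one_pos (h' x (Ioo_subset_Icc_self hx))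
  have hτge : ∀ s ∈ Set.Icc (0:ℝ) T, t₀ ≤ τ s := by
    intro s hs
    rw [← h0]
    exact hmono (Set.left_mem_Icc.2 hT.le) hs hs.1
  have hτpos : ∀ s ∈ Set.Icc (0:ℝ) T, 0 < τ s := fun s hs => lt_of_lt_of_le ht₀ (hτge s hs)
  have hknp : ∀ s ∈ Set.Icc (0:ℝ) T, k s ≤ 0 := by
    intro s hs
    have h1 : (1 - γ) / γ ≤ 0 := div_nonpos_of_nonpos_of_nonneg (by linarith) hγ0.le
    exact mul_nonpos_of_nonpos_of_nonneg h1 (by linarith [hs.2])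
  have hden : ∀ s ∈ Set.Icc (0:ℝ) T, 0 < τ s - k s := fun s hs => by
    have := hτpos s hs; have := hknp s hs; linarith
  set F : ℝ → ℝ := fun s => Real.log (τ s - k s) - Real.log (τ s) with hFdef
  set g : ℝ → ℝ := fun s => ((γ - 1) / γ) * (1 / (τ s - k s)) with hgdef
  set f : ℝ → ℝ := fun s =>
    τ' s * (((1 - γ) / γ) * (T - s)) / (τ s * (τ s - ((1 - γ) / γ) * (T - s))) with hfdef
  have hF : ∀ s ∈ Set.Icc (0:ℝ) T, HasDerivAt F (f s - g s) s := by
    intro s hs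
    have h1 : HasDerivAt (fun s => τ s - k s) (τ' s - (γ - 1) / γ) s :=
      (hdiff s hs).sub (hkderiv s)
    have h2 : HasDerivAt F ((τ' s - (γ - 1) / γ) / (τ s - k s) - τ' s / (τ s)) s :=
      (h1.log (hden s hs).ne').sub ((hdiff s hs).log (hτpos s hs).ne')
    convert h2 using 1
    have hτ0 : τ s ≠ 0 := (hτpos s hs).ne'
    have hd0 : τ s - k s ≠ 0 := (hden s hs).ne'
    have gen : ∀ (a b K kp : ℝ), a ≠ 0 → a - K ≠ 0 →
        b * K / (a * (a - K)) - kp * (1 / (a - K)) = (b - kp) / (a - K) - b / a := by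
      intro a b K kp ha hd
      field_simp
      ring
    exact gen (τ s) (τ' s) (k s) ((γ - 1) / γ) hτ0 hd0
  -- integrability
  have huIcc : Set.uIcc (0:ℝ) T = Set.Icc 0 T := Set.uIcc_of_le hT.le
  have hcontden : ContinuousOn (fun s => τ s - k s) (Set.Icc 0 T) := by
    apply hτcont.sub
    exact ((continuous_const.mul (continuous_const.sub continuous_id)).continuousOn)
  have hgint : IntervalIntegrable g MeasureTheory.volume 0 T := by
    apply ContinuousOn.intervalIntegrable
    rw [huIcc]
    exact continuousOn_const.mul (continuousOn_const.div hcontden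
      (fun s hs => (hden s hs).ne'))
  have hfint : IntervalIntegrable f MeasureTheory.volume 0 T := by
    apply ContinuousOn.intervalIntegrable
    rw [huIcc]
    apply ContinuousOn.div
    · exact hcont.mul ((continuous_const.mul (continuous_const.sub continuous_id)).continuousOn)
    · exact hτcont.mul hcontden
    · intro s hs
      exact (mul_pos (hτpos s hs) (hden s hs)).ne'
  have hsub : (∫ s in (0:ℝ)..T, (f s - g s)) = F T - F 0 := by
    apply intervalIntegral.integral_eq_sub_of_hasDerivAt
    · intro s hs
      rw [huIcc] at hs
      exact hF s hs
    · exact hfint.sub hgint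
  have hsplit : (∫ s in (0:ℝ)..T, f s) = (F T - F 0) + ∫ s in (0:ℝ)..T, g s := by
    rw [← hsub, intervalIntegral.integral_sub hfint hgint]
    ring
  have hkT : k T = 0 := by simp [hkdef]
  have hk0 : k 0 = ((1 - γ) / γ) * T := by simp [hkdef]
  have hFT : F T = 0 := by simp [hFdef, hkT]
  have hF0 : F 0 = Real.log (t₀ - ((1 - γ) / γ) * T) - Real.log t₀ := by
    simp [hFdef, hk0, h0]
  have hgval : (∫ s in (0:ℝ)..T, g s)
      = ((γ - 1) / γ) * ∫ s in (0:ℝ)..T, 1 / (τ s - ((1 - γ) / γ) * (T - s)) := by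
    simp only [hgdef, hkdef]
    rw [intervalIntegral.integral_const_mul]
  calc (∫ s in (0:ℝ)..T, f s) = (F T - F 0) + ∫ s in (0:ℝ)..T, g s := hsplit
    _ = _ := by rw [hFT, hF0, hgval]; ring

/-- For `γ > 1`, a larger informative clock gives a smaller constant `c`, but (since the
CRRA utility is negative) a larger value function `V = U(e^{rT}x₀)·exp(γ(a(0)(μ₀−r)²/2 + c))`. -/
theorem stmt7 (T t₀ γ σ r μ₀ x₀ : ℝ) (hT : 0 < T) (ht₀ : 0 < t₀) (hγ : 1 < γ)
    (hσ : 0 < σ) (hx₀ : 0 < x₀)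
    (τ₁ τ₁' τ₂ τ₂' : ℝ → ℝ)
    (h₁diff : ∀ t ∈ Set.Icc (0 : ℝ) T, HasDerivAt τ₁ (τ₁' t) t)
    (h₂diff : ∀ t ∈ Set.Icc (0 : ℝ) T, HasDerivAt τ₂ (τ₂' t) t)
    (h₁cont : ContinuousOn τ₁' (Set.Icc 0 T))
    (h₂cont : ContinuousOn τ₂' (Set.Icc 0 T))
    (h₁0 : τ₁ 0 = t₀) (h₂0 : τ₂ 0 = t₀)
    (h₁' : ∀ t ∈ Set.Icc (0 : ℝ) T, 1 ≤ τ₁' t)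
    (h₂' : ∀ t ∈ Set.Icc (0 : ℝ) T, 1 ≤ τ₂' t)
    (hle : ∀ t ∈ Set.Icc (0 : ℝ) T, τ₂ t ≤ τ₁ t)
    (c₁ c₂ a₀ : ℝ)
    (hc₁ : c₁ = (1 / (2 * γ)) * ∫ s in (0 : ℝ)..T,
        τ₁' s * (((1 - γ) / γ) * (T - s)) / (τ₁ s * (τ₁ s - ((1 - γ) / γ) * (T - s))))
    (hc₂ : c₂ = (1 / (2 * γ)) * ∫ s in (0 : ℝ)..T,
        τ₂' s * (((1 - γ) / γ) * (T - s)) / (τ₂ s * (τ₂ s - ((1 - γ) / γ) * (T - s))))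
    (ha₀ : a₀ = (1 / (γ * σ ^ 2)) * (t₀ * (((1 - γ) / γ) * T) / (t₀ - ((1 - γ) / γ) * T)))
    (U : ℝ → ℝ) (hU : U = fun x : ℝ => x ^ (1 - γ) / (1 - γ)) :
    c₁ ≤ c₂ ∧
      U (Real.exp (r * T) * x₀) * Real.exp (γ * (a₀ * (μ₀ - r) ^ 2 / 2 + c₂)) ≤
        U (Real.exp (r * T) * x₀) * Real.exp (γ * (a₀ * (μ₀ - r) ^ 2 / 2 + c₁)) := by
  have hγ0 : (0:ℝ) < γ := lt_trans one_pos hγ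
  -- positivity facts for τᵢ
  have key : ∀ (τ τ' : ℝ → ℝ),
      (∀ t ∈ Set.Icc (0 : ℝ) T, HasDerivAt τ (τ' t) t) →
      ContinuousOn τ' (Set.Icc 0 T) → τ 0 = t₀ →
      (∀ t ∈ Set.Icc (0 : ℝ) T, 1 ≤ τ' t) →
      ∀ s ∈ Set.Icc (0:ℝ) T, t₀ ≤ τ s := by
    intro τ τ' hdiff hcont h0 h' s hs
    have hτcont : ContinuousOn τ (Set.Icc 0 T) := fun x hx =>
      (hdiff x hx).continuousAt.continuousWithinAt
    have hmono : MonotoneOn τ (Set.Icc 0 T) := by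
      apply (strictMonoOn_of_deriv_pos (convex_Icc 0 T) hτcont ?_).monotoneOn
      intro x hx
      rw [interior_Icc] at hx
      rw [(hdiff x (Ioo_subset_Icc_self hx)).deriv]
      exact lt_of_lt_of_le one_pos (h' x (Ioo_subset_Icc_self hx))
    rw [← h0]
    exact hmono (Set.left_mem_Icc.2 hT.le) hs hs.1
  have hτ₁ge := key τ₁ τ₁' h₁diff h₁cont h₁0 h₁'
  have hτ₂ge := key τ₂ τ₂' h₂diff h₂cont h₂0 h₂'
  have hknp : ∀ s ∈ Set.Icc (0:ℝ) T, ((1 - γ) / γ) * (T - s) ≤ 0 := by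
    intro s hs
    have h1 : (1 - γ) / γ ≤ 0 := div_nonpos_of_nonpos_of_nonneg (by linarith) hγ0.le
    exact mul_nonpos_of_nonpos_of_nonneg h1 (by linarith [hs.2])
  have hden₁ : ∀ s ∈ Set.Icc (0:ℝ) T, 0 < τ₁ s - ((1 - γ) / γ) * (T - s) := fun s hs => by
    have := hτ₁ge s hs; have := hknp s hs; linarith
  have hden₂ : ∀ s ∈ Set.Icc (0:ℝ) T, 0 < τ₂ s - ((1 - γ) / γ) * (T - s) := fun s hs => by
    have := hτ₂ge s hs; have := hknp s hs; linarith
  -- compare the monotone integrals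
  have hint₁ : IntervalIntegrable (fun s => 1 / (τ₁ s - ((1 - γ) / γ) * (T - s)))
      MeasureTheory.volume 0 T := by
    apply ContinuousOn.intervalIntegrable
    rw [Set.uIcc_of_le hT.le]
    apply continuousOn_const.div
    · have hτc : ContinuousOn τ₁ (Set.Icc 0 T) := fun x hx =>
        (h₁diff x hx).continuousAt.continuousWithinAt
      exact hτc.sub ((continuous_const.mul (continuous_const.sub continuous_id)).continuousOn)
    · exact fun s hs => (hden₁ s hs).ne'
  have hint₂ : IntervalIntegrable (fun s => 1 / (τ₂ s - ((1 - γ) / γ) * (T - s)))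
      MeasureTheory.volume 0 T := by
    apply ContinuousOn.intervalIntegrable
    rw [Set.uIcc_of_le hT.le]
    apply continuousOn_const.div
    · have hτc : ContinuousOn τ₂ (Set.Icc 0 T) := fun x hx =>
        (h₂diff x hx).continuousAt.continuousWithinAt
      exact hτc.sub ((continuous_const.mul (continuous_const.sub continuous_id)).continuousOn)
    · exact fun s hs => (hden₂ s hs).ne'
  have hintle : (∫ s in (0:ℝ)..T, 1 / (τ₁ s - ((1 - γ) / γ) * (T - s)))
      ≤ ∫ s in (0:ℝ)..T, 1 / (τ₂ s - ((1 - γ) / γ) * (T - s)) := by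
    apply intervalIntegral.integral_mono_on hT.le hint₁ hint₂
    intro s hs
    exact one_div_le_one_div_of_le (hden₂ s hs) (by linarith [hle s hs])
  have heq₁ := clock_integral_eq T t₀ γ hT ht₀ hγ τ₁ τ₁' h₁diff h₁cont h₁0 h₁'
  have heq₂ := clock_integral_eq T t₀ γ hT ht₀ hγ τ₂ τ₂' h₂diff h₂cont h₂0 h₂'
  have hc : c₁ ≤ c₂ := by
    rw [hc₁, hc₂, heq₁, heq₂]
    have hfac : (0:ℝ) ≤ (γ - 1) / γ := div_nonneg (by linarith) hγ0.le
    have := mul_le_mul_of_nonneg_left hintle hfac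
    have h2γ : (0:ℝ) ≤ 1 / (2 * γ) := by positivity
    apply mul_le_mul_of_nonneg_left _ h2γ
    linarith
  refine ⟨hc, ?_⟩
  have hUneg : U (Real.exp (r * T) * x₀) ≤ 0 := by
    rw [hU]
    apply le_of_lt
    apply div_neg_of_pos_of_neg
    · exact Real.rpow_pos_of_pos (mul_pos (Real.exp_pos _) hx₀) _
    · linarith
  have hexp : Real.exp (γ * (a₀ * (μ₀ - r) ^ 2 / 2 + c₁))
      ≤ Real.exp (γ * (a₀ * (μ₀ - r) ^ 2 / 2 + c₂)) := by
    apply Real.exp_le_exp.2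
    nlinarith
  exact mul_le_mul_of_nonpos_left hexp hUneg
end

section
/- Let β > 0, T > 0, t₀ > 0. Then ∫₀ᵀ (1/(2β)) · (T−s)·n / ((t₀+ns)(t₀+ns+T−s)) ds → (1/(2β))·ln((t₀+T)/t₀) as n → ∞, i.e., the CARA value-function constant c(0) with linear informative clock τₙ(t) = t₀ + n t converges to (1/(2β))·ln((t₀+T)/t₀). -/
open Filter Real intervalIntegral

private lemma integral_eq (β T t₀ n : ℝ) (hβ : 0 < β) (hT : 0 < T) (ht₀ : 0 < t₀)
    (hn : 2 ≤ n) :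
    (∫ s in (0 : ℝ)..T,
        (1 / (2 * β)) * ((T - s) * n / ((t₀ + n * s) * (t₀ + n * s + T - s)))) =
      (1 / (2 * β)) * (-(Real.log (t₀ + n * T) / (n - 1)) - Real.log t₀
        + (n / (n - 1)) * Real.log (t₀ + T)) := by
  have hn1 : (1:ℝ) < n := by linarith
  have hn0 : n - 1 ≠ 0 := by linarith
  have hpos : ∀ s ∈ Set.uIcc (0:ℝ) T, 0 < t₀ + n * s ∧ 0 < t₀ + T + (n - 1) * s := by
    intro s hs
    rw [Set.uIcc_of_le hT.le] at hs
    constructor <;> nlinarith [hs.1, hs.2]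
  set F : ℝ → ℝ := fun s => (1 / (2 * β)) *
      (Real.log (t₀ + n * s) - (n / (n - 1)) * Real.log (t₀ + T + (n - 1) * s)) with hF
  have hderiv : ∀ s ∈ Set.uIcc (0:ℝ) T, HasDerivAt F
      ((1 / (2 * β)) * ((T - s) * n / ((t₀ + n * s) * (t₀ + n * s + T - s)))) s := by
    intro s hs
    obtain ⟨h1, h2⟩ := hpos s hs
    have d1 : HasDerivAt (fun s : ℝ => t₀ + n * s) n s := by
      simpa using ((hasDerivAt_id s).const_mul n).const_add t₀
    have d2 : HasDerivAt (fun s : ℝ => t₀ + T + (n - 1) * s) (n - 1) s := by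
      simpa using ((hasDerivAt_id s).const_mul (n - 1)).const_add (t₀ + T)
    have l1 := d1.log h1.ne'
    have l2 := d2.log h2.ne'
    have := ((l1.sub (l2.const_mul (n / (n - 1)))).const_mul (1 / (2 * β)))
    refine this.congr_deriv ?_
    symm
    have h3 : t₀ + n * s + T - s = t₀ + T + (n - 1) * s := by ring
    rw [h3]
    have h4 : n / (n - 1) * ((n - 1) / (t₀ + T + (n - 1) * s)) = n / (t₀ + T + (n - 1) * s) := by
      rw [div_mul_div_comm, mul_comm (n - 1) (t₀ + T + (n - 1) * s), mul_div_mul_right _ _ hn0]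
    rw [h4, div_sub_div _ _ h1.ne' h2.ne']
    congr 1
    congr 1
    ring
  have hint : IntervalIntegrable
      (fun s => (1 / (2 * β)) * ((T - s) * n / ((t₀ + n * s) * (t₀ + n * s + T - s))))
      MeasureTheory.volume 0 T := by
    apply ContinuousOn.intervalIntegrable
    apply ContinuousOn.mul continuousOn_const
    apply ContinuousOn.div
    · fun_prop
    · fun_prop
    · intro s hs
      obtain ⟨h1, h2⟩ := hpos s hs
      have h3 : t₀ + n * s + T - s = t₀ + T + (n - 1) * s := by ring
      rw [h3]
      positivity
  rw [intervalIntegral.integral_eq_sub_of_hasDerivAt hderiv hint]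
  have hTT : t₀ + T + (n - 1) * T = t₀ + n * T := by ring
  simp only [hF, mul_zero, add_zero, hTT]
  field_simp
  ring

/-- With linear informative clock `τₙ(t) = t₀ + n t`, the CARA constant `c(0)` converges, as
`n → ∞`, to its insider-information bound `(1/(2β))·log((t₀+T)/t₀)`. -/
theorem stmt9 (β T t₀ : ℝ) (hβ : 0 < β) (hT : 0 < T) (ht₀ : 0 < t₀) :
    Filter.Tendsto
      (fun n : ℝ => ∫ s in (0 : ℝ)..T,
        (1 / (2 * β)) * ((T - s) * n / ((t₀ + n * s) * (t₀ + n * s + T - s))))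
      Filter.atTop (nhds ((1 / (2 * β)) * Real.log ((t₀ + T) / t₀))) := by
  have hA : Tendsto (fun n : ℝ => Real.log (t₀ + n * T) / (n - 1)) atTop (nhds 0) := by
    have hx : Tendsto (fun n : ℝ => t₀ + n * T) atTop atTop := by
      apply tendsto_atTop_add_const_left
      exact Tendsto.atTop_mul_const hT tendsto_id
    have h1 : Tendsto (fun n : ℝ => Real.log (t₀ + n * T) / (t₀ + n * T)) atTop (nhds 0) :=
      (Real.isLittleO_log_id_atTop.tendsto_div_nhds_zero).comp hx
    have h2 : Tendsto (fun n : ℝ => (t₀ + n * T) / (n - 1)) atTop (nhds T) := by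
      have : Tendsto (fun n : ℝ => T + (t₀ + T) / (n - 1)) atTop (nhds T) := by
        have h3 : Tendsto (fun n : ℝ => (t₀ + T) / (n - 1)) atTop (nhds 0) := by
          apply Tendsto.div_atTop tendsto_const_nhds
          exact tendsto_atTop_add_const_right _ _ tendsto_id
        simpa using tendsto_const_nhds.add h3
      apply this.congr'
      filter_upwards [eventually_gt_atTop 1] with n hn
      have : n - 1 ≠ 0 := by linarith
      field_simp
      ring
    have := h1.mul h2
    rw [zero_mul] at this
    apply this.congr'
    filter_upwards [eventually_gt_atTop 1] with n hn
    have hx0 : (0:ℝ) < t₀ + n * T := by nlinarith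
    field_simp
  have hB : Tendsto (fun n : ℝ => n / (n - 1)) atTop (nhds 1) := by
    have h3 : Tendsto (fun n : ℝ => 1 + 1 / (n - 1)) atTop (nhds 1) := by
      have : Tendsto (fun n : ℝ => (1:ℝ) / (n - 1)) atTop (nhds 0) :=
        Tendsto.div_atTop tendsto_const_nhds (tendsto_atTop_add_const_right _ _ tendsto_id)
      simpa using tendsto_const_nhds.add this
    apply h3.congr'
    filter_upwards [eventually_gt_atTop 1] with n hn
    have : n - 1 ≠ 0 := by linarith
    field_simp
    ring
  have hg : Tendsto (fun n : ℝ => (1 / (2 * β)) * (-(Real.log (t₀ + n * T) / (n - 1))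
      - Real.log t₀ + (n / (n - 1)) * Real.log (t₀ + T))) atTop
      (nhds ((1 / (2 * β)) * Real.log ((t₀ + T) / t₀))) := by
    have := (((hA.neg.sub_const (Real.log t₀)).add (hB.mul_const (Real.log (t₀ + T)))).const_mul
      (1 / (2 * β)))
    have heq : (1 / (2 * β)) * (-0 - Real.log t₀ + 1 * Real.log (t₀ + T)) =
        (1 / (2 * β)) * Real.log ((t₀ + T) / t₀) := by
      rw [Real.log_div (by positivity) (by positivity)]
      ring
    rw [heq] at this
    exact this
  apply hg.congr'
  filter_upwards [eventually_ge_atTop (2:ℝ)] with n hn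
  exact (integral_eq β T t₀ n hβ hT ht₀ hn).symm
end

section
/- Let γ ∈ (0,1), T > 0, t₀ > 0 with t₀/T > (1−γ)/γ, and k := (1−γ)/γ. For any continuously differentiable τ : [0,T] → ℝ with τ(0) = t₀ and τ'(t) ≥ 1, it holds that (1/(2γ)) ∫₀ᵀ τ'(s)·k(T−s) / (τ(s)(τ(s) − k(T−s))) ds ≤ (1/(2γ))·ln(t₀/(t₀ − kT)). -/
/-- Maximal value of extra information in the CRRA case with `0 < γ < 1`:
with `k = (1−γ)/γ` and `t₀/T > k`, for any informative clock `τ` with `τ(0) = t₀`, `τ' ≥ 1`,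
`(1/(2γ))∫₀ᵀ τ'(s)k(T−s)/(τ(s)(τ(s)−k(T−s))) ds ≤ (1/(2γ))·log(t₀/(t₀−kT))`. -/
theorem stmt11 (γ T t₀ : ℝ) (hγ0 : 0 < γ) (hγ1 : γ < 1) (hT : 0 < T) (ht₀ : 0 < t₀)
    (hcond : (1 - γ) / γ < t₀ / T)
    (k : ℝ) (hk : k = (1 - γ) / γ)
    (τ τ' : ℝ → ℝ)
    (hτdiff : ∀ s ∈ Set.Icc (0 : ℝ) T, HasDerivAt τ (τ' s) s)
    (hτ'cont : ContinuousOn τ' (Set.Icc 0 T))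
    (hτ0 : τ 0 = t₀)
    (hτ' : ∀ s ∈ Set.Icc (0 : ℝ) T, 1 ≤ τ' s) :
    (1 / (2 * γ)) * ∫ s in (0 : ℝ)..T,
        τ' s * (k * (T - s)) / (τ s * (τ s - k * (T - s))) ≤
      (1 / (2 * γ)) * Real.log (t₀ / (t₀ - k * T)) := by
  have hk0 : 0 < k := by rw [hk]; exact div_pos (by linarith) hγ0
  have hkT : k * T < t₀ := by
    rw [hk] at *; exact (lt_div_iff₀ hT).mp hcond
  have huIcc : Set.uIcc (0 : ℝ) T = Set.Icc 0 T := Set.uIcc_of_le hT.le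
  -- τ s ≥ t₀ + s
  have hτcont : ContinuousOn τ (Set.Icc 0 T) := fun s hs =>
    (hτdiff s hs).continuousAt.continuousWithinAt
  have hmono : MonotoneOn (fun s => τ s - s) (Set.Icc 0 T) := by
    apply monotoneOn_of_deriv_nonneg (convex_Icc 0 T)
      (hτcont.sub continuousOn_id)
    · intro x hx
      rw [interior_Icc] at hx
      exact ((hτdiff x (Set.Ioo_subset_Icc_self hx)).sub (hasDerivAt_id x)).differentiableAt.differentiableWithinAt
    · intro x hx
      rw [interior_Icc] at hx
      have hd := ((hτdiff x (Set.Ioo_subset_Icc_self hx)).sub (hasDerivAt_id x)).deriv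
      rw [hd]
      have := hτ' x (Set.Ioo_subset_Icc_self hx)
      linarith
  have hτlb : ∀ s ∈ Set.Icc (0 : ℝ) T, t₀ + s ≤ τ s := by
    intro s hs
    have h0 : (0 : ℝ) ∈ Set.Icc (0 : ℝ) T := ⟨le_refl _, hT.le⟩
    have := hmono h0 hs hs.1
    simp only [hτ0, sub_zero] at this
    linarith
  have hτpos : ∀ s ∈ Set.Icc (0 : ℝ) T, 0 < τ s := fun s hs =>
    lt_of_lt_of_le (by linarith [hs.1]) (hτlb s hs)
  have hgpos : ∀ s ∈ Set.Icc (0 : ℝ) T, 0 < τ s - k * (T - s) := by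
    intro s hs
    have h1 := hτlb s hs
    have h2 : k * (T - s) ≤ k * T := by nlinarith [hs.1]
    have h3 := hs.1
    linarith
  -- derivative of F
  have hF : ∀ s ∈ Set.uIcc (0 : ℝ) T,
      HasDerivAt (fun u => Real.log (τ u) - Real.log (τ u - k * (T - u)))
        (τ' s / τ s - (τ' s + k) / (τ s - k * (T - s))) s := by
    rw [huIcc]
    intro s hs
    have h1 : HasDerivAt (fun u => Real.log (τ u)) (τ' s / τ s) s :=
      (hτdiff s hs).log (hτpos s hs).ne'
    have hg : HasDerivAt (fun u => τ u - k * (T - u)) (τ' s + k) s := by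
      have hc : HasDerivAt (fun u : ℝ => k * (T - u)) (-k) s := by
        simpa using ((hasDerivAt_id s).const_sub T).const_mul k
      exact ((hτdiff s hs).sub hc).congr_deriv (by ring)
    have h2 : HasDerivAt (fun u => Real.log (τ u - k * (T - u)))
        ((τ' s + k) / (τ s - k * (T - s))) s := hg.log (hgpos s hs).ne'
    exact h1.sub h2
  -- continuity / integrability
  have hgcont : ContinuousOn (fun s => τ s - k * (T - s)) (Set.Icc 0 T) :=
    hτcont.sub (continuousOn_const.mul (continuousOn_const.sub continuousOn_id))
  have hF'cont : ContinuousOn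
      (fun s => τ' s / τ s - (τ' s + k) / (τ s - k * (T - s))) (Set.Icc 0 T) :=
    (hτ'cont.div hτcont (fun s hs => (hτpos s hs).ne')).sub
      ((hτ'cont.add continuousOn_const).div hgcont (fun s hs => (hgpos s hs).ne'))
  have hintF' : IntervalIntegrable
      (fun s => τ' s / τ s - (τ' s + k) / (τ s - k * (T - s))) MeasureTheory.volume 0 T := by
    apply ContinuousOn.intervalIntegrable; rwa [huIcc]
  have hintf : IntervalIntegrable
      (fun s => τ' s * (k * (T - s)) / (τ s * (τ s - k * (T - s)))) MeasureTheory.volume 0 T := by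
    apply ContinuousOn.intervalIntegrable
    rw [huIcc]
    exact (hτ'cont.mul (continuousOn_const.mul (continuousOn_const.sub continuousOn_id))).div
      (hτcont.mul hgcont)
      (fun s hs => (mul_pos (hτpos s hs) (hgpos s hs)).ne')
  -- FTC
  have hFTC := intervalIntegral.integral_eq_sub_of_hasDerivAt hF hintF'
  -- pointwise bound
  have hpt : ∀ s ∈ Set.Icc (0 : ℝ) T,
      τ' s * (k * (T - s)) / (τ s * (τ s - k * (T - s))) ≤
        -(τ' s / τ s - (τ' s + k) / (τ s - k * (T - s))) := by
    intro s hs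
    have hτne := (hτpos s hs).ne'
    have hgne := (hgpos s hs).ne'
    have key : -(τ' s / τ s - (τ' s + k) / (τ s - k * (T - s))) =
        τ' s * (k * (T - s)) / (τ s * (τ s - k * (T - s))) + k / (τ s - k * (T - s)) := by
      field_simp
      ring
    rw [key]
    have : 0 ≤ k / (τ s - k * (T - s)) := div_nonneg hk0.le (hgpos s hs).le
    linarith
  have hmain : (∫ s in (0 : ℝ)..T,
      τ' s * (k * (T - s)) / (τ s * (τ s - k * (T - s)))) ≤
      Real.log (t₀ / (t₀ - k * T)) := by
    have h1 : (∫ s in (0 : ℝ)..T,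
        τ' s * (k * (T - s)) / (τ s * (τ s - k * (T - s)))) ≤
        ∫ s in (0 : ℝ)..T,
          -(τ' s / τ s - (τ' s + k) / (τ s - k * (T - s))) :=
      intervalIntegral.integral_mono_on hT.le hintf hintF'.neg hpt
    have h2 : (∫ s in (0 : ℝ)..T,
        -(τ' s / τ s - (τ' s + k) / (τ s - k * (T - s)))) =
        Real.log (t₀ / (t₀ - k * T)) := by
      rw [intervalIntegral.integral_neg, hFTC]
      have hT0 : Real.log (τ T) - Real.log (τ T - k * (T - T)) = 0 := by
        simp
      have h00 : Real.log (τ 0) - Real.log (τ 0 - k * (T - 0)) =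
          Real.log (t₀ / (t₀ - k * T)) := by
        rw [hτ0]
        rw [Real.log_div ht₀.ne' (by linarith : t₀ - k * T ≠ 0)]
        ring_nf
      rw [neg_sub, hT0, h00]
      ring
    linarith
  have hpos : (0 : ℝ) ≤ 1 / (2 * γ) := by positivity
  exact mul_le_mul_of_nonneg_left hmain hpos
end

section
/- Let β > 0, λ > 0, T > 0, and define the Lagrangian L(t, p, q) = (1/(2β))·(T−t)·q/(p(p+T−t)) − λ(q−1)² for p > 0, q ≥ 1. If τ : [0,T] → (0,∞) is a twice continuously differentiable extremal of the functional ∫₀ᵀ L(t, τ(t), τ'(t)) dt, i.e., satisfies the Euler–Lagrange equation d/dt[∂L/∂q (t,τ(t),τ'(t))] = ∂L/∂p (t,τ(t),τ'(t)), then τ''(t) + (1/(4βλ))·1/(τ(t)+T−t)² = 0 for all t ∈ (0,T). -/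
/-- Euler–Lagrange equation of the CARA net-value functional with quadratic cost:
any extremal informative clock satisfies `τ''(t) + (1/(4βλ))·1/(τ(t)+T−t)² = 0` on `(0,T)`. -/
theorem stmt17 (β lam T : ℝ) (hβ : 0 < β) (hlam : 0 < lam) (hT : 0 < T)
    (L : ℝ → ℝ → ℝ → ℝ)
    (hL : L = fun t p q => (1 / (2 * β)) * ((T - t) * q / (p * (p + T - t)))
      - lam * (q - 1) ^ 2)
    (τ : ℝ → ℝ) (hτC2 : ContDiffOn ℝ 2 τ (Set.Icc 0 T))
    (hτpos : ∀ t ∈ Set.Icc (0 : ℝ) T, 0 < τ t)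
    (hτ' : ∀ t ∈ Set.Icc (0 : ℝ) T, 1 ≤ deriv τ t)
    (hEL : ∀ t ∈ Set.Ioo (0 : ℝ) T,
      deriv (fun s => deriv (fun q => L s (τ s) q) (deriv τ s)) t =
        deriv (fun p => L t p (deriv τ t)) (τ t)) :
    ∀ t ∈ Set.Ioo (0 : ℝ) T,
      deriv (deriv τ) t + (1 / (4 * β * lam)) * (1 / (τ t + T - t) ^ 2) = 0 := by
  subst hL
  intro t ht
  obtain ⟨ht0, htT⟩ := ht
  have htmem : t ∈ Set.Icc (0:ℝ) T := ⟨le_of_lt ht0, le_of_lt htT⟩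
  have hppos : 0 < τ t := hτpos t htmem
  have hapos : 0 < τ t + T - t := by linarith
  have hdne : τ t * (τ t + T - t) ≠ 0 := by positivity
  -- differentiability facts
  have hC2o : ContDiffOn ℝ 2 τ (Set.Ioo (0:ℝ) T) := hτC2.mono Set.Ioo_subset_Icc_self
  have hnhd : Set.Ioo (0:ℝ) T ∈ nhds t := Ioo_mem_nhds ht0 htT
  have hder : HasDerivAt τ (deriv τ t) t :=
    (((hC2o.contDiffAt hnhd).differentiableAt (by norm_num)).hasDerivAt)
  have hC1d : ContDiffOn ℝ 1 (deriv τ) (Set.Ioo (0:ℝ) T) := by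
    have hC2o' : ContDiffOn ℝ ((1 : WithTop ℕ∞) + 1) τ (Set.Ioo (0:ℝ) T) := by
      rw [show ((1 : WithTop ℕ∞) + 1) = 2 from by norm_num]; exact hC2o
    exact ((contDiffOn_succ_iff_deriv_of_isOpen isOpen_Ioo).1 hC2o').2.2
  have hder2 : HasDerivAt (deriv τ) (deriv (deriv τ) t) t :=
    ((hC1d.contDiffAt hnhd).differentiableAt (by norm_num)).hasDerivAt
  set q := deriv τ t with hq
  set r := deriv (deriv τ) t with hr
  -- inner derivative in q is explicit, for every s
  have hFeq : (fun s => deriv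
        (fun q' => (1 / (2 * β)) * ((T - s) * q' / (τ s * (τ s + T - s)))
          - lam * (q' - 1) ^ 2) (deriv τ s))
      = fun s => (1 / (2 * β)) * ((T - s) / (τ s * (τ s + T - s)))
          - 2 * lam * (deriv τ s - 1) := by
    funext s
    have h1 : HasDerivAt
        (fun q' => (1 / (2 * β)) * ((T - s) * q' / (τ s * (τ s + T - s)))
          - lam * (q' - 1) ^ 2)
        ((1 / (2 * β)) * ((T - s) * 1 / (τ s * (τ s + T - s)))
          - lam * ((2:ℕ) * (deriv τ s - 1) ^ 1 * 1)) (deriv τ s) := by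
      exact ((((hasDerivAt_id _).const_mul (T - s)).div_const _).const_mul _).sub
        ((((hasDerivAt_id _).sub_const 1).pow 2).const_mul lam)
    rw [h1.deriv]; ring
  -- derivative of the LHS function
  have hin : HasDerivAt (fun s => τ s + T - s) (q - 1) t := by
    exact (hder.add_const T).sub (hasDerivAt_id t)
  have hden : HasDerivAt (fun s => τ s * (τ s + T - s))
      (q * (τ t + T - t) + τ t * (q - 1)) t := hder.mul hin
  have hnum : HasDerivAt (fun s => T - s) (-1) t := by
    simpa using (hasDerivAt_id t).const_sub T
  have hG : HasDerivAt
      (fun s => (1 / (2 * β)) * ((T - s) / (τ s * (τ s + T - s)))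
        - 2 * lam * (deriv τ s - 1))
      ((1 / (2 * β)) * (((-1) * (τ t * (τ t + T - t))
          - (T - t) * (q * (τ t + T - t) + τ t * (q - 1)))
        / (τ t * (τ t + T - t)) ^ 2) - 2 * lam * r) t := by
    exact (((hnum.div hden hdne).const_mul _).sub ((hder2.sub_const 1).const_mul (2*lam)))
  -- derivative of the RHS function
  have hden2 : HasDerivAt (fun p' => p' * (p' + T - t)) (1 * (τ t + T - t) + τ t * 1) (τ t) := by
    exact (hasDerivAt_id _).mul (((hasDerivAt_id _).add_const T).sub_const t)
  have hR : HasDerivAt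
      (fun p' => (1 / (2 * β)) * ((T - t) * q / (p' * (p' + T - t))) - lam * (q - 1) ^ 2)
      ((1 / (2 * β)) * ((0 * (τ t * (τ t + T - t))
          - (T - t) * q * (1 * (τ t + T - t) + τ t * 1)) / (τ t * (τ t + T - t)) ^ 2)) (τ t) := by
    simpa using
      ((((hasDerivAt_const (τ t) ((T - t) * q)).div hden2 hdne).const_mul
        (1 / (2 * β))).sub_const (lam * (q - 1) ^ 2))
  -- assemble the EL equation with explicit derivatives
  have E := hEL t ⟨ht0, htT⟩
  simp only [] at E
  rw [hFeq, hG.deriv, hR.deriv] at E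
  -- final algebra
  have hβ' : β ≠ 0 := ne_of_gt hβ
  have hlam' : lam ≠ 0 := ne_of_gt hlam
  have hp' : τ t ≠ 0 := ne_of_gt hppos
  have ha' : τ t + T - t ≠ 0 := ne_of_gt hapos
  field_simp at E ⊢
  have h3 : (r * (4 * β * lam * (τ t + T - t) ^ 2) + 1) * (τ t) ^ 2 = 0 := by
    linear_combination -E
  have h4 := (mul_eq_zero.1 h3).resolve_right (pow_ne_zero 2 hp')
  linear_combination h4
end
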